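/- Let A ∈ ℝ^{n×n}, B ∈ ℝ^{n×m}, C ∈ ℝ^{m×n}, Ã ∈ ℝ^{q×q}, B̃ ∈ ℝ^{q×m}, C̃ ∈ ℝ^{m×q}, and define A_ic = [[A, B C̃],[0, Ã]], B_ic = [B; B̃], C_ic = [C, 0]. Then for every λ ∈ ℂ that is neither an eigenvalue of A nor of Ã, det [[A_ic − λI, B_ic],[C_ic, 0]] = det [[A − λI, B],[C, 0]] · det(Ã − λI) · det( I_m + C̃ (λI − Ã)^{−1} B̃ ). -/

import Mathlib

open Matrix

private lemma my_inv_neg {k : ℕ} (M : Matrix (Fin k) (Fin k) ℂ) (h : IsUnit M.det) :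
    (-M)⁻¹ = -(M⁻¹) := by
  apply Matrix.inv_eq_right_inv
  rw [neg_mul_neg, Matrix.mul_nonsing_inv _ h]

private lemma my_map_mul {a b c : ℕ} (M : Matrix (Fin a) (Fin b) ℝ)
    (N : Matrix (Fin b) (Fin c) ℝ) :
    (M * N).map Complex.ofReal = M.map Complex.ofReal * N.map Complex.ofReal :=
  Matrix.map_mul (f := Complex.ofRealHom)

private lemma my_fromRows_map {a b c : ℕ} (M : Matrix (Fin a) (Fin c) ℝ)
    (N : Matrix (Fin b) (Fin c) ℝ) :
    (fromRows M N).map Complex.ofReal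
      = fromRows (M.map Complex.ofReal) (N.map Complex.ofReal) := by
  ext i j; cases i <;> rfl

private lemma my_fromColumns_map {a b c : ℕ} (M : Matrix (Fin c) (Fin a) ℝ)
    (N : Matrix (Fin c) (Fin b) ℝ) :
    (fromCols M N).map Complex.ofReal
      = fromCols (M.map Complex.ofReal) (N.map Complex.ofReal) := by
  ext i j; cases j <;> rfl

private lemma aux_key (n m q : ℕ) (P : Matrix (Fin n) (Fin n) ℂ)
    (B : Matrix (Fin n) (Fin m) ℂ) (C : Matrix (Fin m) (Fin n) ℂ)
    (S : Matrix (Fin q) (Fin q) ℂ) (Bt : Matrix (Fin q) (Fin m) ℂ)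
    (Ct : Matrix (Fin m) (Fin q) ℂ) (hP : IsUnit P.det) (hS : IsUnit S.det) :
    (fromBlocks (fromBlocks P (B * Ct) 0 S) (fromRows B Bt) (fromCols C 0) 0).det
      = (fromBlocks P B C 0).det * S.det * ((1 : Matrix (Fin m) (Fin m) ℂ)
          - Ct * S⁻¹ * Bt).det := by
  haveI := P.invertibleOfIsUnitDet hP
  haveI := S.invertibleOfIsUnitDet hS
  haveI : Invertible (fromBlocks P (B * Ct) 0 S) := fromBlocksZero₂₁Invertible P (B * Ct) S
  rw [det_fromBlocks₁₁ (fromBlocks P (B * Ct) 0 S), det_fromBlocks₁₁ P (B * Ct),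
    det_fromBlocks₁₁ P B]
  rw [invOf_eq_nonsing_inv, invOf_eq_nonsing_inv,
    inv_fromBlocks_zero₂₁_of_isUnit_iff P (B * Ct) S
      (iff_of_true ((Matrix.isUnit_iff_isUnit_det P).mpr hP)
        ((Matrix.isUnit_iff_isUnit_det S).mpr hS))]
  rw [fromCols_mul_fromBlocks, fromCols_mul_fromRows]
  simp only [Matrix.zero_mul, Matrix.mul_zero, add_zero, zero_add, sub_zero]
  have e1 : (0 : Matrix (Fin m) (Fin m) ℂ)
      - (C * P⁻¹ * B + C * -(P⁻¹ * (B * Ct) * S⁻¹) * Bt)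
      = (0 - C * P⁻¹ * B) * (1 - Ct * S⁻¹ * Bt) := by
    have e0 : C * (P⁻¹ * (B * Ct) * S⁻¹) * Bt = C * P⁻¹ * B * (Ct * S⁻¹ * Bt) := by
      simp only [Matrix.mul_assoc]
    rw [Matrix.mul_neg, Matrix.neg_mul, e0, zero_sub, zero_sub, Matrix.neg_mul,
      Matrix.mul_sub, Matrix.mul_one]
    abel
  rw [e1, det_mul]
  ring

/-- **Rosenbrock determinant of the series interconnection.**
For every `λ ∈ ℂ` that is neither an eigenvalue of `A` nor of `Ã`,
`det [[A_ic − λI, B_ic],[C_ic, 0]]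
   = det [[A − λI, B],[C, 0]] · det(Ã − λI) · det( I + C̃ (λI − Ã)⁻¹ B̃ )`. -/
theorem stmt_3 (n m q : ℕ)
    (A : Matrix (Fin n) (Fin n) ℝ) (B : Matrix (Fin n) (Fin m) ℝ) (C : Matrix (Fin m) (Fin n) ℝ)
    (Atil : Matrix (Fin q) (Fin q) ℝ) (Btil : Matrix (Fin q) (Fin m) ℝ)
    (Ctil : Matrix (Fin m) (Fin q) ℝ)
    (Aic : Matrix (Fin n ⊕ Fin q) (Fin n ⊕ Fin q) ℝ)
    (Bic : Matrix (Fin n ⊕ Fin q) (Fin m) ℝ)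
    (Cic : Matrix (Fin m) (Fin n ⊕ Fin q) ℝ)
    (hAic : Aic = Matrix.fromBlocks A (B * Ctil) 0 Atil)
    (hBic : Bic = Matrix.fromRows B Btil)
    (hCic : Cic = Matrix.fromCols C 0)
    (lam : ℂ)
    (hA : (lam • (1 : Matrix (Fin n) (Fin n) ℂ) - A.map Complex.ofReal).det ≠ 0)
    (hAtil : (lam • (1 : Matrix (Fin q) (Fin q) ℂ) - Atil.map Complex.ofReal).det ≠ 0) :
    (Matrix.fromBlocks
        (Aic.map Complex.ofReal - lam • (1 : Matrix (Fin n ⊕ Fin q) (Fin n ⊕ Fin q) ℂ))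
        (Bic.map Complex.ofReal) (Cic.map Complex.ofReal) 0).det
      = (Matrix.fromBlocks
            (A.map Complex.ofReal - lam • (1 : Matrix (Fin n) (Fin n) ℂ))
            (B.map Complex.ofReal) (C.map Complex.ofReal) 0).det
        * (Atil.map Complex.ofReal - lam • (1 : Matrix (Fin q) (Fin q) ℂ)).det
        * ((1 : Matrix (Fin m) (Fin m) ℂ)
            + Ctil.map Complex.ofReal
              * (lam • (1 : Matrix (Fin q) (Fin q) ℂ) - Atil.map Complex.ofReal)⁻¹
              * Btil.map Complex.ofReal).det := by
  subst hAic hBic hCic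
  set A' := A.map Complex.ofReal
  set B' := B.map Complex.ofReal
  set C' := C.map Complex.ofReal
  set At' := Atil.map Complex.ofReal
  set Bt' := Btil.map Complex.ofReal
  set Ct' := Ctil.map Complex.ofReal
  set P := A' - lam • (1 : Matrix (Fin n) (Fin n) ℂ) with hPdef
  set S := At' - lam • (1 : Matrix (Fin q) (Fin q) ℂ) with hSdef
  have hP : IsUnit P.det := by
    rw [isUnit_iff_ne_zero]
    intro h
    apply hA
    have : lam • (1 : Matrix (Fin n) (Fin n) ℂ) - A' = -P := by rw [hPdef]; abel
    rw [this, Matrix.det_neg, h, mul_zero]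
  have hS : IsUnit S.det := by
    rw [isUnit_iff_ne_zero]
    intro h
    apply hAtil
    have : lam • (1 : Matrix (Fin q) (Fin q) ℂ) - At' = -S := by rw [hSdef]; abel
    rw [this, Matrix.det_neg, h, mul_zero]
  have hblock : (fromBlocks A (B * Ctil) 0 Atil).map Complex.ofReal
      - lam • (1 : Matrix (Fin n ⊕ Fin q) (Fin n ⊕ Fin q) ℂ)
      = fromBlocks P (B' * Ct') 0 S := by
    rw [Matrix.fromBlocks_map, ← Matrix.fromBlocks_one, Matrix.fromBlocks_smul, my_map_mul]
    rw [sub_eq_add_neg, Matrix.fromBlocks_neg, Matrix.fromBlocks_add]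
    simp [hPdef, hSdef, sub_eq_add_neg]
    exact ⟨rfl, rfl, rfl⟩
  have hSinv : (lam • (1 : Matrix (Fin q) (Fin q) ℂ) - At')⁻¹ = -(S⁻¹) := by
    have : lam • (1 : Matrix (Fin q) (Fin q) ℂ) - At' = -S := by rw [hSdef]; abel
    rw [this, my_inv_neg S hS]
  have hdelta : (1 : Matrix (Fin m) (Fin m) ℂ)
      + Ct' * (lam • (1 : Matrix (Fin q) (Fin q) ℂ) - At')⁻¹ * Bt'
      = 1 - Ct' * S⁻¹ * Bt' := by
    rw [hSinv, Matrix.mul_neg, Matrix.neg_mul, ← sub_eq_add_neg]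
  rw [hblock, my_fromRows_map, my_fromColumns_map, hdelta]
  exact aux_key n m q P B' C' S Bt' Ct' hP hS
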